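/- Let 𝔯 be a solvable Lie algebra with derived series 𝔯₀ = 𝔯, 𝔯_{i+1} = ⁅𝔯_i, 𝔯_i⁆, terminating with 𝔯_k ≠ 0 and 𝔯_{k+1} = 0, and let 𝔞(𝔯) = z(𝔯₀) + z(𝔯₁) + ⋯ + z(𝔯_k). Then 𝔞(𝔯) is an abelian ideal of 𝔯: ⁅𝔯, 𝔞(𝔯)⁆ ⊆ 𝔞(𝔯) and ⁅x, y⁆ = 0 for all x, y ∈ 𝔞(𝔯). -/

import Mathlib

def lieIdealCenter {K : Type*} [Field K] {L : Type*} [LieRing L] [LieAlgebra K L]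
    (I : LieIdeal K L) : Submodule K L where
  carrier := {x : L | x ∈ I ∧ ∀ y ∈ I, ⁅x, y⁆ = 0}
  add_mem' := by
    rintro a b ⟨haI, ha⟩ ⟨hbI, hb⟩
    exact ⟨I.add_mem haI hbI, fun y hy => by rw [add_lie, ha y hy, hb y hy, add_zero]⟩
  zero_mem' := ⟨I.zero_mem, fun y _ => zero_lie y⟩
  smul_mem' := by
    rintro t a ⟨haI, ha⟩
    exact ⟨I.smul_mem t haI, fun y hy => by rw [smul_lie, ha y hy, smul_zero]⟩

lemma lie_mem_lieIdealCenter {K : Type*} [Field K] {L : Type*} [LieRing L] [LieAlgebra K L]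
    (I : LieIdeal K L) (X : L) {x : L} (hx : x ∈ lieIdealCenter I) :
    ⁅X, x⁆ ∈ lieIdealCenter I := by
  obtain ⟨hxI, hx⟩ := hx
  refine ⟨I.lie_mem hxI, fun y hy => ?_⟩
  have h1 : ⁅x, ⁅X, y⁆⁆ = 0 := hx _ (I.lie_mem hy)
  have h2 : ⁅x, y⁆ = 0 := hx y hy
  rw [lie_lie, h2, lie_zero, h1, sub_zero]

lemma mem_finsetSum_submodule {K : Type*} [Field K] {L : Type*} [AddCommGroup L] [Module K L]
    {ι : Type*} {s : Finset ι} {p : ι → Submodule K L} {x : L}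
    (hx : x ∈ ∑ i ∈ s, p i) :
    ∃ f : ι → L, (∀ i ∈ s, f i ∈ p i) ∧ x = ∑ i ∈ s, f i := by
  classical
  induction s using Finset.induction_on generalizing x with
  | empty =>
    refine ⟨0, by simp, ?_⟩
    simpa using hx
  | insert _ _ hnm ih =>
    rename_i a t
    rw [Finset.sum_insert hnm, Submodule.add_eq_sup, Submodule.mem_sup] at hx
    obtain ⟨y, hy, z, hz, rfl⟩ := hx
    obtain ⟨f, hf, rfl⟩ := ih hz
    refine ⟨Function.update f a y, fun i hi => ?_, ?_⟩
    · rcases Finset.mem_insert.mp hi with rfl | hit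
      · simpa using hy
      · rw [Function.update_of_ne (by rintro rfl; exact hnm hit)]
        exact hf i hit
    · rw [Finset.sum_insert hnm, Function.update_self]
      congr 1
      exact (Finset.sum_congr rfl fun i hi =>
        (Function.update_of_ne (by rintro rfl; exact hnm hi) _ _).symm)

theorem a_r_abelian_ideal
    {K : Type*} [Field K] {L : Type*} [LieRing L] [LieAlgebra K L]
    [LieAlgebra.IsSolvable L] (k : ℕ)
    (hk : LieAlgebra.derivedSeries K L k ≠ ⊥)
    (hk1 : LieAlgebra.derivedSeries K L (k + 1) = ⊥) :
    (∀ X : L, ∀ x ∈ ∑ i ∈ Finset.range (k + 1),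
        lieIdealCenter (LieAlgebra.derivedSeries K L i),
      ⁅X, x⁆ ∈ ∑ i ∈ Finset.range (k + 1),
        lieIdealCenter (LieAlgebra.derivedSeries K L i)) ∧
    (∀ x ∈ ∑ i ∈ Finset.range (k + 1), lieIdealCenter (LieAlgebra.derivedSeries K L i),
      ∀ y ∈ ∑ i ∈ Finset.range (k + 1), lieIdealCenter (LieAlgebra.derivedSeries K L i),
        ⁅x, y⁆ = 0) := by
  have hmono : ∀ {i j : ℕ}, i ≤ j →
      LieAlgebra.derivedSeries K L j ≤ LieAlgebra.derivedSeries K L i := fun h =>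
    LieAlgebra.derivedSeriesOfIdeal_antitone (I := ⊤) h
  have key : ∀ i j : ℕ, ∀ x ∈ lieIdealCenter (LieAlgebra.derivedSeries K L i),
      ∀ y ∈ lieIdealCenter (LieAlgebra.derivedSeries K L j), ⁅x, y⁆ = 0 := by
    intro i j x hx y hy
    rcases le_total i j with h | h
    · exact hx.2 y (hmono h hy.1)
    · rw [← lie_skew, hy.2 x (hmono h hx.1), neg_zero]
  constructor
  · intro X x hx
    obtain ⟨f, hf, rfl⟩ := mem_finsetSum_submodule hx
    have : ⁅X, ∑ i ∈ Finset.range (k + 1), f i⁆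
        = ∑ i ∈ Finset.range (k + 1), ⁅X, f i⁆ :=
      map_sum (LieAlgebra.ad K L X) f _
    rw [this]
    refine Submodule.sum_mem _ fun i hi => ?_
    have hle : lieIdealCenter (LieAlgebra.derivedSeries K L i) ≤
        ∑ j ∈ Finset.range (k + 1), lieIdealCenter (LieAlgebra.derivedSeries K L j) :=
      Finset.single_le_sum (f := fun j => lieIdealCenter (LieAlgebra.derivedSeries K L j))
        (fun j _ => bot_le) hi
    exact hle (lie_mem_lieIdealCenter _ X (hf i hi))
  · intro x hx y hy
    obtain ⟨f, hf, rfl⟩ := mem_finsetSum_submodule hx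
    obtain ⟨g, hg, rfl⟩ := mem_finsetSum_submodule hy
    have hy0 : ∀ i, ⁅f i, ∑ j ∈ Finset.range (k + 1), g j⁆
        = ∑ j ∈ Finset.range (k + 1), ⁅f i, g j⁆ := fun i =>
      map_sum (LieAlgebra.ad K L (f i)) g _
    have : ⁅∑ i ∈ Finset.range (k + 1), f i, ∑ j ∈ Finset.range (k + 1), g j⁆
        = ∑ i ∈ Finset.range (k + 1), ⁅f i, ∑ j ∈ Finset.range (k + 1), g j⁆ :=
      map_sum ((LieAlgebra.ad K L : L →ₗ[K] Module.End K L).flip (∑ j ∈ Finset.range (k + 1), g j)) f _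
    rw [this]
    refine Finset.sum_eq_zero fun i hi => ?_
    rw [hy0]
    exact Finset.sum_eq_zero fun j hj => key i j _ (hf i hi) _ (hg j hj)
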